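/- In the arithmetical semiring of finite simple unlabeled graphs (addition = disjoint union, multiplication = Cartesian product, degree = number of vertices), for all sufficiently large n: G⁺(n) − G□(n) ≤ G(⌊n/2⌋) + G(⌊n/3⌋ + 3), where G(n) is the number of graphs on n vertices, G⁺(n) the number of connected graphs on n vertices, and G□(n) the number of connected graphs on n vertices that are prime with respect to the Cartesian product. -/

import Mathlib

open SimpleGraph

/-- A graph on `n` vertices is Cartesian prime if `n ≥ 2` and it is not isomorphic to a
Cartesian (box) product of two graphs each with at least two vertices. -/
def IsCartPrime {n : ℕ} (G : SimpleGraph (Fin n)) : Prop :=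
  2 ≤ n ∧ ¬ ∃ (a b : ℕ) (G₁ : SimpleGraph (Fin a)) (G₂ : SimpleGraph (Fin b)),
    2 ≤ a ∧ 2 ≤ b ∧ Nonempty (G ≃g G₁.boxProd G₂)

/-- The number of isomorphism classes of simple graphs on `n` vertices. -/
noncomputable def graphCount (n : ℕ) : ℕ :=
  Nat.card (Quot fun G H : SimpleGraph (Fin n) => Nonempty (G ≃g H))

/-- The number of isomorphism classes of connected simple graphs on `n` vertices. -/
noncomputable def connCount (n : ℕ) : ℕ :=
  Nat.card (Quot fun G H : {G : SimpleGraph (Fin n) // G.Connected} => Nonempty (G.1 ≃g H.1))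

/-- The number of isomorphism classes of connected Cartesian-prime graphs on `n` vertices. -/
noncomputable def primeCount (n : ℕ) : ℕ :=
  Nat.card (Quot fun G H : {G : SimpleGraph (Fin n) // G.Connected ∧ IsCartPrime G} =>
    Nonempty (G.1 ≃g H.1))

variable {α β γ α' β' γ' : Type*}

/-- Constancy of a function along a connected graph. -/
lemma aux_const {V M : Type*} {G : SimpleGraph V} (h : G.Preconnected) (f : V → M)
    (hf : ∀ a b, G.Adj a b → f a = f b) (u v : V) : f u = f v := by
  obtain ⟨p⟩ := h u v
  induction p with
  | nil => rfl
  | cons h' _ ih => exact (hf _ _ h').trans ih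

lemma aux_exists_adj {V : Type*} [Nontrivial V] {G : SimpleGraph V} (h : G.Connected)
    (v : V) : ∃ w, G.Adj v w := by
  obtain ⟨u, hu⟩ := exists_ne v
  obtain ⟨p⟩ := h.preconnected v u
  cases p with
  | nil => exact absurd rfl (Ne.symm hu)
  | cons h' _ => exact ⟨_, h'⟩

lemma aux_walk_adj {G : SimpleGraph (Fin 2)} {x y : Fin 2} (p : G.Walk x y) :
    x ≠ y → G.Adj x y := by
  induction p with
  | nil => exact fun h => absurd rfl h
  | @cons u c w h' p' ih =>
    intro h
    by_cases hcw : c = w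
    · exact hcw ▸ h'
    · exfalso
      have h1 : u ≠ c := h'.ne
      have hx := u.isLt; have hy := w.isLt; have hc := c.isLt
      have e1 : (u : ℕ) ≠ c := fun e => h1 (Fin.ext e)
      have e2 : (u : ℕ) ≠ w := fun e => h (Fin.ext e)
      have e3 : (c : ℕ) ≠ w := fun e => hcw (Fin.ext e)
      omega

lemma aux_conn_two {G : SimpleGraph (Fin 2)} (h : G.Connected) : G = ⊤ := by
  ext x y
  simp only [top_adj]
  refine ⟨fun h' => h'.ne, fun hxy => ?_⟩
  obtain ⟨p⟩ := h.preconnected x y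
  exact aux_walk_adj p hxy

/-- congruence iso for box products -/
def auxBoxCongr {G₁ : SimpleGraph α} {G₂ : SimpleGraph β} {H₁ : SimpleGraph α'}
    {H₂ : SimpleGraph β'} (e₁ : G₁ ≃g H₁) (e₂ : G₂ ≃g H₂) :
    G₁.boxProd G₂ ≃g H₁.boxProd H₂ where
  toEquiv := Equiv.prodCongr e₁.toEquiv e₂.toEquiv
  map_rel_iff' := by
    rintro ⟨a₁, a₂⟩ ⟨b₁, b₂⟩
    simp [boxProd_adj, e₁.map_rel_iff, e₂.map_rel_iff,
      EmbeddingLike.apply_eq_iff_eq]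

/-- congruence iso for sums -/
def auxSumCongr {G₁ : SimpleGraph α} {G₂ : SimpleGraph β} {H₁ : SimpleGraph α'}
    {H₂ : SimpleGraph β'} (e₁ : G₁ ≃g H₁) (e₂ : G₂ ≃g H₂) :
    G₁ ⊕g G₂ ≃g H₁ ⊕g H₂ where
  toEquiv := Equiv.sumCongr e₁.toEquiv e₂.toEquiv
  map_rel_iff' := by
    rintro (u | u) (v | v) <;> simp [e₁.map_rel_iff, e₂.map_rel_iff]

/-- swapping the two main summands under a padded sum -/
def auxCommInner {GA : SimpleGraph α} {GB : SimpleGraph β} :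
    (GA ⊕g GB) ⊕g (⊥ : SimpleGraph γ) ≃g (GB ⊕g GA) ⊕g (⊥ : SimpleGraph γ) :=
  auxSumCongr (Iso.sumComm : GA ⊕g GB ≃g GB ⊕g GA) (Iso.refl : (⊥ : SimpleGraph γ) ≃g ⊥)

/-- block index of a vertex of a padded sum -/
def auxBlk : (α ⊕ β) ⊕ γ → ℕ
  | Sum.inl (Sum.inl _) => 0
  | Sum.inl (Sum.inr _) => 1
  | Sum.inr _ => 2

lemma auxBlk_adj {G₁ : SimpleGraph α} {G₂ : SimpleGraph β} {x y : (α ⊕ β) ⊕ γ}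
    (h : ((G₁ ⊕g G₂) ⊕g (⊥ : SimpleGraph γ)).Adj x y) : auxBlk x = auxBlk y := by
  rcases x with (x | x) | x <;> rcases y with (y | y) | y <;> simp_all [auxBlk, SimpleGraph.sum_adj]

section Block

variable {G₁ : SimpleGraph α} {G₂ : SimpleGraph β} {G₁' : SimpleGraph α'} {G₂' : SimpleGraph β'}

lemma auxBlockIso (h₁ : G₁.Connected) (h₁' : G₁'.Connected)
    (Φ : (G₁ ⊕g G₂) ⊕g (⊥ : SimpleGraph γ) ≃g (G₁' ⊕g G₂') ⊕g (⊥ : SimpleGraph γ'))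
    {v₀ : α} {u₀' : α'} (h₀ : Φ (Sum.inl (Sum.inl v₀)) = Sum.inl (Sum.inl u₀')) :
    Nonempty (G₁ ≃g G₁') ∧ (∀ v, ∃ u', Φ (Sum.inl (Sum.inl v)) = Sum.inl (Sum.inl u')) ∧
      (∀ u', ∃ v, Φ.symm (Sum.inl (Sum.inl u')) = Sum.inl (Sum.inl v)) := by
  have hfwd : ∀ v, ∃ u', Φ (Sum.inl (Sum.inl v)) = Sum.inl (Sum.inl u') := by
    intro v
    have hconst : auxBlk (Φ (Sum.inl (Sum.inl v))) = auxBlk (Φ (Sum.inl (Sum.inl v₀))) := by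
      apply aux_const h₁.preconnected (fun w => auxBlk (Φ (Sum.inl (Sum.inl w))))
      intro a b hab
      exact auxBlk_adj (Φ.map_rel_iff.mpr (by simp [SimpleGraph.sum_adj, hab]))
    rw [h₀] at hconst
    rcases hΦ : Φ (Sum.inl (Sum.inl v)) with (u | u) | u <;>
      simp_all [auxBlk]
  choose f hf using hfwd
  have hbwd : ∀ u', ∃ v, Φ.symm (Sum.inl (Sum.inl u')) = Sum.inl (Sum.inl v) := by
    intro u'
    have hconst : auxBlk (Φ.symm (Sum.inl (Sum.inl u'))) =
        auxBlk (Φ.symm (Sum.inl (Sum.inl (f v₀)))) := by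
      apply aux_const h₁'.preconnected (fun w => auxBlk (Φ.symm (Sum.inl (Sum.inl w))))
      intro a b hab
      exact auxBlk_adj (Φ.symm.map_rel_iff.mpr (by simp [SimpleGraph.sum_adj, hab]))
    have : Φ.symm (Sum.inl (Sum.inl (f v₀))) = Sum.inl (Sum.inl v₀) := by
      rw [← hf v₀]; exact Φ.symm_apply_apply _
    rw [this] at hconst
    rcases hΦ : Φ.symm (Sum.inl (Sum.inl u')) with (v | v) | v <;>
      simp_all [auxBlk]
  choose g hg using hbwd
  refine ⟨⟨⟨⟨f, g, ?_, ?_⟩, ?_⟩⟩, fun v => ⟨f v, hf v⟩, fun u' => ⟨g u', hg u'⟩⟩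
  · intro v
    have : Φ.symm (Sum.inl (Sum.inl (f v))) = Sum.inl (Sum.inl v) := by
      rw [← hf v]; exact Φ.symm_apply_apply _
    have := (hg (f v)).symm.trans this
    simpa using this
  · intro u'
    have h1 := hg u'
    have : Φ (Sum.inl (Sum.inl (g u'))) = Sum.inl (Sum.inl u') := by
      rw [← h1]; exact Φ.apply_symm_apply _
    have := (hf (g u')).symm.trans this
    simpa using this
  · intro a b
    constructor
    · intro hadj
      have : ((G₁' ⊕g G₂') ⊕g (⊥ : SimpleGraph γ')).Adj (Φ (Sum.inl (Sum.inl a)))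
          (Φ (Sum.inl (Sum.inl b))) := by
        rw [hf a, hf b]; simpa [SimpleGraph.sum_adj] using hadj
      have := Φ.map_rel_iff.mp this
      simpa [SimpleGraph.sum_adj] using this
    · intro hadj
      have : ((G₁' ⊕g G₂') ⊕g (⊥ : SimpleGraph γ')).Adj (Sum.inl (Sum.inl (f a)))
          (Sum.inl (Sum.inl (f b))) := by
        rw [← hf a, ← hf b]
        exact Φ.map_rel_iff.mpr (by simpa [SimpleGraph.sum_adj] using hadj)
      simpa [SimpleGraph.sum_adj] using this

lemma aux_sum_decomp_main {α β γ α' β' γ' : Type*} {G₁ : SimpleGraph α} {G₂ : SimpleGraph β}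
    {G₁' : SimpleGraph α'} {G₂' : SimpleGraph β'} [Nontrivial α] [Nontrivial β]
    [Nontrivial α'] [Nontrivial β']
    (h₁ : G₁.Connected) (h₂ : G₂.Connected) (h₁' : G₁'.Connected) (h₂' : G₂'.Connected)
    (Φ : (G₁ ⊕g G₂) ⊕g (⊥ : SimpleGraph γ) ≃g (G₁' ⊕g G₂') ⊕g (⊥ : SimpleGraph γ'))
    (v₀ : α) (u₀' : α') (h₀ : Φ (Sum.inl (Sum.inl v₀)) = Sum.inl (Sum.inl u₀')) :
    Nonempty (G₁ ≃g G₁') ∧ Nonempty (G₂ ≃g G₂') := by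
  obtain ⟨e₁, hfwd, hbwd⟩ := auxBlockIso h₁ h₁' Φ h₀
  refine ⟨e₁, ?_⟩
  obtain ⟨w₀⟩ := (inferInstance : Nonempty β)
  rcases hx : Φ (Sum.inl (Sum.inr w₀)) with (u | w') | c
  · obtain ⟨v, hv⟩ := hbwd u
    have : Φ.symm (Sum.inl (Sum.inl u)) = Sum.inl (Sum.inr w₀) := by
      rw [← hx]; exact Φ.symm_apply_apply _
    rw [this] at hv
    simp at hv
  · refine (auxBlockIso h₂ h₂' ((@auxCommInner _ _ γ G₂ G₁).trans
      (Φ.trans (@auxCommInner _ _ γ' G₁' G₂'))) (v₀ := w₀) (u₀' := w') ?_).1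
    simp [auxCommInner, auxSumCongr, hx]
  · exfalso
    obtain ⟨w₁, hw₁⟩ := aux_exists_adj h₂ w₀
    have : ((G₁' ⊕g G₂') ⊕g (⊥ : SimpleGraph γ')).Adj (Φ (Sum.inl (Sum.inr w₀)))
        (Φ (Sum.inl (Sum.inr w₁))) :=
      Φ.map_rel_iff.mpr (by simp [SimpleGraph.sum_adj, hw₁])
    rw [hx] at this
    rcases hy : Φ (Sum.inl (Sum.inr w₁)) with (u | u) | u <;> rw [hy] at this <;>
      simp [SimpleGraph.sum_adj] at this

lemma aux_sum_decomp [Nontrivial α] [Nontrivial β] [Nontrivial α'] [Nontrivial β']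
    (h₁ : G₁.Connected) (h₂ : G₂.Connected) (h₁' : G₁'.Connected) (h₂' : G₂'.Connected)
    (Φ : (G₁ ⊕g G₂) ⊕g (⊥ : SimpleGraph γ) ≃g (G₁' ⊕g G₂') ⊕g (⊥ : SimpleGraph γ')) :
    (Nonempty (G₁ ≃g G₁') ∧ Nonempty (G₂ ≃g G₂')) ∨
      (Nonempty (G₁ ≃g G₂') ∧ Nonempty (G₂ ≃g G₁')) := by
  obtain ⟨v₀⟩ := (inferInstance : Nonempty α)
  rcases hx : Φ (Sum.inl (Sum.inl v₀)) with (u | w') | c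
  · exact Or.inl (aux_sum_decomp_main h₁ h₂ h₁' h₂' Φ v₀ u hx)
  · exact Or.inr (aux_sum_decomp_main h₁ h₂ h₂' h₁'
      (Φ.trans (@auxCommInner _ _ γ' G₁' G₂')) v₀ w'
      (by simp [auxCommInner, auxSumCongr, hx]))
  · exfalso
    obtain ⟨v₁, hv₁⟩ := aux_exists_adj h₁ v₀
    have : ((G₁' ⊕g G₂') ⊕g (⊥ : SimpleGraph γ')).Adj (Φ (Sum.inl (Sum.inl v₀)))
        (Φ (Sum.inl (Sum.inl v₁))) :=
      Φ.map_rel_iff.mpr (by simp [SimpleGraph.sum_adj, hv₁])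
    rw [hx] at this
    rcases hy : Φ (Sum.inl (Sum.inl v₁)) with (u | u) | u <;> rw [hy] at this <;>
      simp [SimpleGraph.sum_adj] at this

end Block

section Quot

variable {T : Type*} (R : T → T → Prop)

lemma aux_quot_mk_eq {hR : Equivalence R} {a b : T} :
    Quot.mk R a = Quot.mk R b ↔ R a b := Quot.eq.trans hR.eqvGen_iff

lemma aux_card_quot_split [Finite T] (hR : Equivalence R) (p q : T → Prop)
    (hq : ∀ a b, R a b → q a → q b) :
    Nat.card (Quot fun a b : {x : T // p x} => R a.1 b.1) ≤
      Nat.card (Quot fun a b : {x : T // p x ∧ q x} => R a.1 b.1) +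
      Nat.card (Quot fun a b : {x : T // p x ∧ ¬ q x} => R a.1 b.1) := by
  classical
  set R1 := fun a b : {x : T // p x ∧ q x} => R a.1 b.1 with hR1
  set R2 := fun a b : {x : T // p x ∧ ¬ q x} => R a.1 b.1 with hR2
  have hEq1 : Equivalence R1 := ⟨fun x => hR.refl x.1, fun h => hR.symm h, fun h h' => hR.trans h h'⟩
  have hEq2 : Equivalence R2 := ⟨fun x => hR.refl x.1, fun h => hR.symm h, fun h h' => hR.trans h h'⟩
  set f : {x : T // p x} → (Quot R1) ⊕ (Quot R2) := fun x =>
    if h : q x.1 then Sum.inl (Quot.mk R1 ⟨x.1, x.2, h⟩) else Sum.inr (Quot.mk R2 ⟨x.1, x.2, h⟩)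
    with hfdef
  have hresp : ∀ a b : {x : T // p x}, R a.1 b.1 → f a = f b := by
    intro a b hab
    by_cases h : q a.1
    · have h' : q b.1 := hq _ _ hab h
      simp only [hfdef, dif_pos h, dif_pos h']
      exact congrArg _ (Quot.sound hab)
    · have h' : ¬ q b.1 := fun hb => h (hq _ _ (hR.symm hab) hb)
      simp only [hfdef, dif_neg h, dif_neg h']
      exact congrArg _ (Quot.sound hab)
  set F : (Quot fun a b : {x : T // p x} => R a.1 b.1) → (Quot R1) ⊕ (Quot R2) :=
    Quot.lift f hresp with hFdef
  have hinj : Function.Injective F := by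
    intro x y
    induction x using Quot.ind with | _ a =>
    induction y using Quot.ind with | _ b =>
    intro hxy
    replace hxy : f a = f b := hxy
    apply Quot.sound
    show R a.1 b.1
    by_cases ha : q a.1 <;> by_cases hb : q b.1 <;>
      simp only [hfdef, dif_pos, dif_neg, ha, hb, dite_true, dite_false] at hxy <;>
      first
        | exact (aux_quot_mk_eq _ (hR := hEq1)).mp (Sum.inl.inj hxy)
        | exact (aux_quot_mk_eq _ (hR := hEq2)).mp (Sum.inr.inj hxy)
        | cases hxy
  calc Nat.card (Quot fun a b : {x : T // p x} => R a.1 b.1)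
      ≤ Nat.card ((Quot R1) ⊕ (Quot R2)) := Nat.card_le_card_of_injective F hinj
    _ = _ := Nat.card_sum

end Quot

section Graphs

/-- The graph-isomorphism relation is an equivalence. -/
lemma aux_iso_equiv (n : ℕ) :
    Equivalence (fun G H : SimpleGraph (Fin n) => Nonempty (G ≃g H)) :=
  ⟨fun _ => ⟨Iso.refl⟩, fun ⟨e⟩ => ⟨e.symm⟩, fun ⟨e⟩ ⟨e'⟩ => ⟨e.trans e'⟩⟩

/-- `G` has a `K₂` Cartesian factor (with cofactor on `n / 2` vertices). -/
def auxPA {n : ℕ} (G : SimpleGraph (Fin n)) : Prop :=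
  ∃ H : SimpleGraph (Fin (n / 2)), Nonempty (G ≃g (⊤ : SimpleGraph (Fin 2)).boxProd H)

lemma aux_conn_inv {n : ℕ} {G H : SimpleGraph (Fin n)} (e : Nonempty (G ≃g H))
    (h : G.Connected) : H.Connected := by
  obtain ⟨e⟩ := e; exact (Iso.connected_iff e).mp h

lemma aux_prime_inv {n : ℕ} {G H : SimpleGraph (Fin n)} (e : Nonempty (G ≃g H))
    (h : IsCartPrime G) : IsCartPrime H := by
  obtain ⟨e⟩ := e
  refine ⟨h.1, fun ⟨a, b, G₁, G₂, ha, hb, ⟨φ⟩⟩ => h.2 ⟨a, b, G₁, G₂, ha, hb, ⟨e.trans φ⟩⟩⟩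

lemma aux_pa_inv {n : ℕ} {G H : SimpleGraph (Fin n)} (e : Nonempty (G ≃g H))
    (h : auxPA G) : auxPA H := by
  obtain ⟨e⟩ := e; obtain ⟨K, ⟨φ⟩⟩ := h
  exact ⟨K, ⟨e.symm.trans φ⟩⟩

/-- Key uniqueness lemma for the encoding of composite graphs without `K₂` factors. -/
lemma auxB_key {n m : ℕ} {U U' : SimpleGraph (Fin m)}
    {a b a' b' k k' : ℕ} {G₁ : SimpleGraph (Fin a)} {G₂ : SimpleGraph (Fin b)}
    {G₁' : SimpleGraph (Fin a')} {G₂' : SimpleGraph (Fin b')}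
    {G G' : SimpleGraph (Fin n)}
    (ha : 2 ≤ a) (hb : 2 ≤ b) (ha' : 2 ≤ a') (hb' : 2 ≤ b')
    (hc1 : G₁.Connected) (hc2 : G₂.Connected) (hc1' : G₁'.Connected) (hc2' : G₂'.Connected)
    (hG : Nonempty (G ≃g G₁.boxProd G₂)) (hG' : Nonempty (G' ≃g G₁'.boxProd G₂'))
    (hU : Nonempty (U ≃g (G₁ ⊕g G₂) ⊕g (⊥ : SimpleGraph (Fin k))))
    (hU' : Nonempty (U' ≃g (G₁' ⊕g G₂') ⊕g (⊥ : SimpleGraph (Fin k'))))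
    (hUU : Nonempty (U ≃g U')) : Nonempty (G ≃g G') := by
  obtain ⟨φ⟩ := hG; obtain ⟨φ'⟩ := hG'; obtain ⟨ψ⟩ := hU; obtain ⟨ψ'⟩ := hU'
  obtain ⟨χ⟩ := hUU
  have n1 : Nontrivial (Fin a) := Fin.nontrivial_iff_two_le.mpr ha
  have n2 : Nontrivial (Fin b) := Fin.nontrivial_iff_two_le.mpr hb
  have n3 : Nontrivial (Fin a') := Fin.nontrivial_iff_two_le.mpr ha'
  have n4 : Nontrivial (Fin b') := Fin.nontrivial_iff_two_le.mpr hb'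
  have Φ := (ψ.symm.trans χ).trans ψ'
  rcases aux_sum_decomp hc1 hc2 hc1' hc2' Φ with ⟨⟨e₁⟩, ⟨e₂⟩⟩ | ⟨⟨e₁⟩, ⟨e₂⟩⟩
  · exact ⟨φ.trans ((auxBoxCongr e₁ e₂).trans φ'.symm)⟩
  · exact ⟨φ.trans (((auxBoxCongr e₁ e₂).trans (boxProdComm _ _)).trans φ'.symm)⟩

end Graphs

section Buckets

/-- Composite connected graphs with a `K₂` factor are counted by graphs on `n / 2` vertices. -/
lemma auxA (n : ℕ) :
    Nat.card (Quot fun x y : {x : SimpleGraph (Fin n) //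
        (x.Connected ∧ ¬ IsCartPrime x) ∧ auxPA x} => Nonempty (x.1 ≃g y.1)) ≤
      graphCount (n / 2) := by
  classical
  set TA := {x : SimpleGraph (Fin n) // (x.Connected ∧ ¬ IsCartPrime x) ∧ auxPA x} with hTA
  set RA := fun x y : TA => Nonempty (x.1 ≃g y.1) with hRA
  by_cases hne : Nonempty (Quot RA)
  case neg =>
    rw [not_nonempty_iff] at hne
    rw [Nat.card_of_isEmpty]
    exact Nat.zero_le _
  obtain ⟨d⟩ := hne
  set f : SimpleGraph (Fin (n / 2)) → Quot RA := fun U =>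
    if h : ∃ G : TA, Nonempty (G.1 ≃g (⊤ : SimpleGraph (Fin 2)).boxProd U) then
      Quot.mk RA h.choose
    else d
    with hfdef
  have hcond : ∀ {U U' : SimpleGraph (Fin (n / 2))}, (U ≃g U') →
      (∃ G : TA, Nonempty (G.1 ≃g (⊤ : SimpleGraph (Fin 2)).boxProd U)) →
      (∃ G : TA, Nonempty (G.1 ≃g (⊤ : SimpleGraph (Fin 2)).boxProd U')) := by
    rintro U U' ψ ⟨G, ⟨φ⟩⟩
    exact ⟨G, ⟨φ.trans (auxBoxCongr Iso.refl ψ)⟩⟩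
  have hresp : ∀ U U' : SimpleGraph (Fin (n / 2)), Nonempty (U ≃g U') → f U = f U' := by
    rintro U U' ⟨ψ⟩
    by_cases h : ∃ G : TA, Nonempty (G.1 ≃g (⊤ : SimpleGraph (Fin 2)).boxProd U)
    · have h' := hcond ψ h
      simp only [hfdef, dif_pos h, dif_pos h']
      apply Quot.sound
      obtain ⟨φ⟩ := h.choose_spec
      obtain ⟨φ'⟩ := h'.choose_spec
      exact ⟨φ.trans ((auxBoxCongr Iso.refl ψ).trans φ'.symm)⟩
    · have h' : ¬ _ := fun hh => h (hcond ψ.symm hh)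
      simp only [hfdef, dif_neg h, dif_neg h']
  set F : (Quot fun U U' : SimpleGraph (Fin (n / 2)) => Nonempty (U ≃g U')) → Quot RA :=
    Quot.lift f hresp with hFdef
  have hsurj : Function.Surjective F := by
    intro q
    induction q using Quot.ind with | _ G =>
    obtain ⟨H, ⟨φ⟩⟩ := G.2.2
    refine ⟨Quot.mk _ H, ?_⟩
    have h : ∃ G' : TA, Nonempty (G'.1 ≃g (⊤ : SimpleGraph (Fin 2)).boxProd H) := ⟨G, ⟨φ⟩⟩
    have : F (Quot.mk _ H) = Quot.mk RA h.choose := by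
      simp only [hFdef, hfdef]
      exact dif_pos h
    rw [this]
    apply Quot.sound
    obtain ⟨φ'⟩ := h.choose_spec
    exact ⟨φ'.trans φ.symm⟩
  exact Nat.card_le_card_of_surjective F hsurj

end Buckets

section BucketB

/-- Witness data: `U` encodes a factorization of `G`. -/
def auxWit (n : ℕ) (G : SimpleGraph (Fin n)) {m : ℕ} (U : SimpleGraph (Fin m)) : Prop :=
  ∃ (a b k : ℕ) (G₁ : SimpleGraph (Fin a)) (G₂ : SimpleGraph (Fin b)),
    2 ≤ a ∧ 2 ≤ b ∧ G₁.Connected ∧ G₂.Connected ∧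
    Nonempty (G ≃g G₁.boxProd G₂) ∧
    Nonempty (U ≃g (G₁ ⊕g G₂) ⊕g (⊥ : SimpleGraph (Fin k)))

lemma auxWit_key {n m : ℕ} {G G' : SimpleGraph (Fin n)} {U U' : SimpleGraph (Fin m)}
    (h : auxWit n G U) (h' : auxWit n G' U') (hUU : Nonempty (U ≃g U')) :
    Nonempty (G ≃g G') := by
  obtain ⟨a, b, k, G₁, G₂, ha, hb, hc1, hc2, hG, hU⟩ := h
  obtain ⟨a', b', k', G₁', G₂', ha', hb', hc1', hc2', hG', hU'⟩ := h'
  exact auxB_key ha hb ha' hb' hc1 hc2 hc1' hc2' hG hG' hU hU' hUU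

lemma auxWit_trans {n m : ℕ} {G : SimpleGraph (Fin n)} {U U' : SimpleGraph (Fin m)}
    (h : auxWit n G U) (ψ : U' ≃g U) : auxWit n G U' := by
  obtain ⟨a, b, k, G₁, G₂, ha, hb, hc1, hc2, hG, ⟨ι⟩⟩ := h
  exact ⟨a, b, k, G₁, G₂, ha, hb, hc1, hc2, hG, ⟨ψ.trans ι⟩⟩

/-- Composite connected graphs with no `K₂` factor are counted by graphs on `n/3 + 3`
vertices. -/
lemma auxB (n : ℕ) (hn : 2 ≤ n) :
    Nat.card (Quot fun x y : {x : SimpleGraph (Fin n) //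
        (x.Connected ∧ ¬ IsCartPrime x) ∧ ¬ auxPA x} => Nonempty (x.1 ≃g y.1)) ≤
      graphCount (n / 3 + 3) := by
  classical
  set TB := {x : SimpleGraph (Fin n) // (x.Connected ∧ ¬ IsCartPrime x) ∧ ¬ auxPA x} with hTB
  set RB := fun x y : TB => Nonempty (x.1 ≃g y.1) with hRB
  by_cases hne : Nonempty (Quot RB)
  case neg =>
    rw [not_nonempty_iff] at hne
    rw [Nat.card_of_isEmpty]
    exact Nat.zero_le _
  obtain ⟨d⟩ := hne
  set m := n / 3 + 3 with hmdef
  set f : SimpleGraph (Fin m) → Quot RB := fun U =>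
    if h : ∃ G : TB, auxWit n G.1 U then Quot.mk RB h.choose else d
    with hfdef
  have hcond : ∀ {U U' : SimpleGraph (Fin m)}, (U ≃g U') →
      (∃ G : TB, auxWit n G.1 U) → (∃ G : TB, auxWit n G.1 U') := by
    rintro U U' ψ ⟨G, hw⟩
    exact ⟨G, auxWit_trans hw ψ.symm⟩
  have hresp : ∀ U U' : SimpleGraph (Fin m), Nonempty (U ≃g U') → f U = f U' := by
    rintro U U' ⟨ψ⟩
    by_cases h : ∃ G : TB, auxWit n G.1 U
    · have h' := hcond ψ h
      simp only [hfdef, dif_pos h, dif_pos h']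
      exact Quot.sound (auxWit_key h.choose_spec h'.choose_spec ⟨ψ⟩)
    · have h' : ¬ _ := fun hh => h (hcond ψ.symm hh)
      simp only [hfdef, dif_neg h, dif_neg h']
  set F : (Quot fun U U' : SimpleGraph (Fin m) => Nonempty (U ≃g U')) → Quot RB :=
    Quot.lift f hresp with hFdef
  have hsurj : Function.Surjective F := by
    intro q
    induction q using Quot.ind with | _ G =>
    obtain ⟨⟨hconn, hncp⟩, hnpa⟩ := G.2
    have hex : ∃ (a b : ℕ) (G₁ : SimpleGraph (Fin a)) (G₂ : SimpleGraph (Fin b)),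
        2 ≤ a ∧ 2 ≤ b ∧ Nonempty (G.1 ≃g G₁.boxProd G₂) := by
      by_contra hcon
      exact hncp ⟨hn, hcon⟩
    obtain ⟨a, b, G₁, G₂, ha, hb, ⟨φ⟩⟩ := hex
    have hcard : n = a * b := by
      have := Fintype.card_congr φ.toEquiv
      simpa using this
    have hcc := (connected_boxProd).mp ((Iso.connected_iff φ).mp hconn)
    obtain ⟨hc1, hc2⟩ := hcc
    have ha3 : 3 ≤ a := by
      by_contra hcon
      have h2 : a = 2 := by omega
      subst h2
      have hb2 : b = n / 2 := by omega
      subst hb2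
      exact hnpa ⟨G₂, ⟨(aux_conn_two hc1) ▸ φ⟩⟩
    have hb3 : 3 ≤ b := by
      by_contra hcon
      have h2 : b = 2 := by omega
      subst h2
      have ha2 : a = n / 2 := by omega
      subst ha2
      exact hnpa ⟨G₁, ⟨(aux_conn_two hc2) ▸ (φ.trans (boxProdComm _ _))⟩⟩
    obtain ⟨x, rfl⟩ : ∃ x, a = x + 3 := ⟨a - 3, by omega⟩
    obtain ⟨y, rfl⟩ : ∃ y, b = y + 3 := ⟨b - 3, by omega⟩
    have h1 : n = x * y + 3 * x + 3 * y + 9 := by rw [hcard]; ring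
    have hab : (x + 3) + (y + 3) ≤ m := by
      rw [hmdef]; omega
    set k := m - ((x + 3) + (y + 3)) with hkdef
    have hm : ((x + 3) + (y + 3)) + k = m := by omega
    set E : Fin m ≃ (Fin (x + 3) ⊕ Fin (y + 3)) ⊕ Fin k :=
      ((finCongr hm.symm).trans finSumFinEquiv.symm).trans
        (Equiv.sumCongr finSumFinEquiv.symm (Equiv.refl _)) with hEdef
    set U : SimpleGraph (Fin m) :=
      SimpleGraph.comap (⇑E) ((G₁ ⊕g G₂) ⊕g (⊥ : SimpleGraph (Fin k))) with hUdef
    have hUiso : U ≃g (G₁ ⊕g G₂) ⊕g (⊥ : SimpleGraph (Fin k)) := ⟨E, Iff.rfl⟩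
    have h : ∃ G' : TB, auxWit n G'.1 U :=
      ⟨G, x + 3, y + 3, k, G₁, G₂, by omega, by omega, hc1, hc2, ⟨φ⟩, ⟨hUiso⟩⟩
    refine ⟨Quot.mk _ U, ?_⟩
    have hF : F (Quot.mk _ U) = Quot.mk RB h.choose := by
      simp only [hFdef, hfdef]
      exact dif_pos h
    rw [hF]
    exact Quot.sound (auxWit_key h.choose_spec
      (⟨x + 3, y + 3, k, G₁, G₂, by omega, by omega, hc1, hc2, ⟨φ⟩, ⟨hUiso⟩⟩ : auxWit n G.1 U)
      ⟨Iso.refl⟩)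
  exact Nat.card_le_card_of_surjective F hsurj

end BucketB

/-- In the arithmetical semiring of finite simple unlabeled graphs, for all sufficiently
large `n`: `G⁺(n) − G□(n) ≤ G(⌊n/2⌋) + G(⌊n/3⌋ + 3)`.
(Stated additively to avoid truncated subtraction.) -/
theorem stmt_11 : ∃ N : ℕ, ∀ n ≥ N,
    connCount n ≤ primeCount n + (graphCount (n / 2) + graphCount (n / 3 + 3)) := by
  refine ⟨2, fun n hn => ?_⟩
  have e1 : connCount n ≤ primeCount n +
      Nat.card (Quot fun x y : {x : SimpleGraph (Fin n) // x.Connected ∧ ¬ IsCartPrime x} =>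
        Nonempty (x.1 ≃g y.1)) :=
    aux_card_quot_split _ (aux_iso_equiv n) (fun G => G.Connected) (fun G => IsCartPrime G)
      (fun _ _ h => aux_prime_inv h)
  have e2 : Nat.card (Quot fun x y : {x : SimpleGraph (Fin n) //
        x.Connected ∧ ¬ IsCartPrime x} => Nonempty (x.1 ≃g y.1)) ≤
      Nat.card (Quot fun x y : {x : SimpleGraph (Fin n) //
        (x.Connected ∧ ¬ IsCartPrime x) ∧ auxPA x} => Nonempty (x.1 ≃g y.1)) +
      Nat.card (Quot fun x y : {x : SimpleGraph (Fin n) //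
        (x.Connected ∧ ¬ IsCartPrime x) ∧ ¬ auxPA x} => Nonempty (x.1 ≃g y.1)) :=
    aux_card_quot_split _ (aux_iso_equiv n) (fun G => G.Connected ∧ ¬ IsCartPrime G)
      (fun G => auxPA G) (fun _ _ h => aux_pa_inv h)
  have e3 := auxA n
  have e4 := auxB n hn
  omega
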